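/- Let (Ω, P) be a probability space, X a finite nonempty index set, and for each x ∈ X let Z_x : Ω → ℝ be a random variable whose law is the Gaussian distribution N(μ_x, σ_x²), where μ_x ∈ ℝ and 0 ≤ σ_x ≤ 1. Let ζ : Ω → ℝ be a nonnegative random variable independent of (Z_x)_{x ∈ X} such that exp(−ζ/2) is integrable. Then E[ max_{x ∈ X} max(0, Z_x − μ_x − √ζ · σ_x) ] ≤ (|X|/√(2π)) · E[ exp(−ζ/2) ]. -/

import Mathlib

open MeasureTheory ProbabilityTheory Real Filter Set
open scoped NNReal ENNReal


lemma gd_tendsto (m s : ℝ) (hs : 0 < s) :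
    Tendsto (fun z => -(s^2) * ((Real.sqrt (2 * π * s^2))⁻¹ * Real.exp (-(z - m)^2 / (2 * s^2))))
      atTop (nhds 0) := by
  have h1 : Tendsto (fun z : ℝ => -(z - m)^2 / (2 * s^2)) atTop atBot := by
    apply Tendsto.atBot_div_const (by positivity)
    apply tendsto_neg_atTop_atBot.comp
    exact (tendsto_pow_atTop (two_ne_zero)).comp (tendsto_atTop_add_const_right _ (-m) tendsto_id)
  have h2 := (Real.tendsto_exp_atBot.comp h1).const_mul (-(s^2) * (Real.sqrt (2 * π * s^2))⁻¹)
  simpa [Function.comp, mul_assoc] using h2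

lemma gd_hasDerivAt (m s : ℝ) (hs : 0 < s) (z : ℝ) :
    HasDerivAt (fun z => -(s^2) * ((Real.sqrt (2 * π * s^2))⁻¹ * Real.exp (-(z - m)^2 / (2 * s^2))))
      ((z - m) * ((Real.sqrt (2 * π * s^2))⁻¹ * Real.exp (-(z - m)^2 / (2 * s^2)))) z := by
  have h1 : HasDerivAt (fun z : ℝ => -(z - m)^2 / (2 * s^2)) (-(z - m) / s^2) z := by
    have h : HasDerivAt (fun z : ℝ => (z - m)^2) (2 * (z - m)) z := by
      simpa using ((hasDerivAt_id z).sub_const m).fun_pow 2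
    have h' := (h.neg).div_const (2 * s^2)
    refine h'.congr_deriv ?_
    field_simp
  have h3 := (h1.exp).const_mul (-(s^2) * (Real.sqrt (2 * π * s^2))⁻¹)
  convert h3 using 1
  · rfl
  · rfl
  · funext w; ring
  · field_simp

lemma gd_nonneg (m s : ℝ) (hs : 0 < s) (z : ℝ) (hz : m ≤ z) :
    0 ≤ (z - m) * ((Real.sqrt (2 * π * s^2))⁻¹ * Real.exp (-(z - m)^2 / (2 * s^2))) := by
  have h0 : (0:ℝ) ≤ (Real.sqrt (2 * π * s^2))⁻¹ := inv_nonneg.mpr (Real.sqrt_nonneg _)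
  have := Real.exp_nonneg (-(z - m)^2 / (2 * s^2))
  have : (0:ℝ) ≤ z - m := by linarith
  positivity

lemma gd_integrableOn (m s c : ℝ) (hs : 0 < s) (hc : 0 ≤ c) :
    IntegrableOn (fun z => (z - m) * ((Real.sqrt (2 * π * s^2))⁻¹ *
      Real.exp (-(z - m)^2 / (2 * s^2)))) (Ioi (m + c * s)) := by
  apply integrableOn_Ioi_deriv_of_nonneg' (fun z _ => gd_hasDerivAt m s hs z)
    (fun z hz => gd_nonneg m s hs z ?_) (gd_tendsto m s hs)
  nlinarith [mem_Ioi.mp hz]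

lemma gd_integral (m s c : ℝ) (hs : 0 < s) (hc : 0 ≤ c) :
    ∫ z in Ioi (m + c * s), (z - m) * ((Real.sqrt (2 * π * s^2))⁻¹ *
      Real.exp (-(z - m)^2 / (2 * s^2)))
      = s * Real.exp (-c^2 / 2) / Real.sqrt (2 * π) := by
  rw [integral_Ioi_of_hasDerivAt_of_nonneg' (fun z _ => gd_hasDerivAt m s hs z)
    (fun z hz => gd_nonneg m s hs z (by nlinarith [mem_Ioi.mp hz])) (gd_tendsto m s hs)]
  have h1 : Real.sqrt (2 * π * s^2) = Real.sqrt (2 * π) * s := by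
    rw [Real.sqrt_mul (by positivity), Real.sqrt_sq hs.le]
  have h2 : (m + c * s - m)^2 / (2 * s^2) = c^2 / 2 := by
    field_simp; ring
  rw [h1]
  have hsp : (0:ℝ) < Real.sqrt (2 * π) := Real.sqrt_pos.mpr (by positivity)
  rw [show m + c * s - m = c * s by ring] at *
  rw [show -(c*s)^2 / (2 * s^2) = -c^2/2 by field_simp]
  field_simp
  ring

lemma pdf_eq (m s : ℝ) :
    gaussianPDFReal m (Real.toNNReal (s^2))
      = fun z => (Real.sqrt (2 * π * s^2))⁻¹ * Real.exp (-(z - m)^2 / (2 * s^2)) := by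
  funext z
  simp [gaussianPDFReal, Real.coe_toNNReal _ (sq_nonneg s)]

lemma gauss_plus_bound (m s c : ℝ) (hs : 0 ≤ s) (hc : 0 ≤ c) :
    ∫ z, max 0 (z - m - c * s) ∂(gaussianReal m (Real.toNNReal (s^2)))
      ≤ s * Real.exp (-c^2 / 2) / Real.sqrt (2 * π) := by
  rcases eq_or_lt_of_le hs with hs0 | hs0
  · subst hs0
    rw [show Real.toNNReal ((0:ℝ)^2) = 0 by simp, gaussianReal_zero_var, integral_dirac]
    simp
  · have hv : Real.toNNReal (s^2) ≠ 0 := by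
      simp only [ne_eq, Real.toNNReal_eq_zero, not_le]
      positivity
    rw [gaussianReal_of_var_ne_zero m hv]
    have hmap : (gaussianPDF m (Real.toNNReal (s^2)))
        = fun z => ((Real.toNNReal (gaussianPDFReal m (Real.toNNReal (s^2)) z) : ℝ≥0) : ℝ≥0∞) := by
      rfl
    rw [hmap, integral_withDensity_eq_integral_smul
      ((measurable_gaussianPDFReal _ _).real_toNNReal) _]
    set C := (Real.sqrt (2 * π * s^2))⁻¹ with hC
    have hC0 : 0 ≤ C := inv_nonneg.mpr (Real.sqrt_nonneg _)
    have hpdf : ∀ z, ((Real.toNNReal (gaussianPDFReal m (Real.toNNReal (s^2)) z) : ℝ≥0) : ℝ)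
        = C * Real.exp (-(z - m)^2 / (2 * s^2)) := by
      intro z
      rw [Real.coe_toNNReal _ (gaussianPDFReal_nonneg _ _ _), pdf_eq]
    calc ∫ z, Real.toNNReal (gaussianPDFReal m (Real.toNNReal (s^2)) z) • max 0 (z - m - c * s)
        ≤ ∫ z, Set.indicator (Ioi (m + c * s))
            (fun z => (z - m) * (C * Real.exp (-(z - m)^2 / (2 * s^2)))) z := by
          apply integral_mono_of_nonneg
          · filter_upwards with z
            have := Real.exp_nonneg (-(z - m)^2 / (2 * s^2))
            simp only [NNReal.smul_def, smul_eq_mul]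
            positivity
          · exact (integrable_indicator_iff measurableSet_Ioi).mpr (gd_integrableOn m s c hs0 hc)
          · filter_upwards with z
            simp only [NNReal.smul_def, smul_eq_mul, hpdf]
            by_cases hz : z ∈ Ioi (m + c * s)
            · rw [Set.indicator_of_mem hz]
              have hz' := mem_Ioi.mp hz
              rw [max_eq_right (by nlinarith)]
              have h1 : z - m - c * s ≤ z - m := by nlinarith
              have he := Real.exp_nonneg (-(z - m)^2 / (2 * s^2))
              nlinarith [mul_le_mul_of_nonneg_left h1 (mul_nonneg hC0 he)]
            · rw [Set.indicator_of_notMem hz]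
              rw [max_eq_left]
              · simp
              · simp only [mem_Ioi, not_lt] at hz
                linarith
      _ = ∫ z in Ioi (m + c * s), (z - m) * (C * Real.exp (-(z - m)^2 / (2 * s^2))) :=
          integral_indicator measurableSet_Ioi
      _ = s * Real.exp (-c^2 / 2) / Real.sqrt (2 * π) := gd_integral m s c hs0 hc

lemma gauss_plus_integrable (m s : ℝ) (hs : 0 ≤ s) :
    Integrable (fun z => max 0 (z - m)) (gaussianReal m (Real.toNNReal (s^2))) := by
  rcases eq_or_lt_of_le hs with hs0 | hs0
  · subst hs0
    rw [show Real.toNNReal ((0:ℝ)^2) = 0 by simp, gaussianReal_zero_var]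
    refine (integrable_const (0:ℝ)).mono' ((continuous_const.max (continuous_id.sub continuous_const)).aestronglyMeasurable) ?_
    rw [ae_dirac_eq]
    simp
  · have hv : Real.toNNReal (s^2) ≠ 0 := by
      simp only [ne_eq, Real.toNNReal_eq_zero, not_le]; positivity
    rw [gaussianReal_of_var_ne_zero m hv]
    have hmap : (gaussianPDF m (Real.toNNReal (s^2)))
        = fun z => ((Real.toNNReal (gaussianPDFReal m (Real.toNNReal (s^2)) z) : ℝ≥0) : ℝ≥0∞) := rfl
    rw [hmap, integrable_withDensity_iff_integrable_smul
      ((measurable_gaussianPDFReal _ _).real_toNNReal)]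
    have heq : (fun z => Real.toNNReal (gaussianPDFReal m (Real.toNNReal (s^2)) z) • max 0 (z - m))
        = Set.indicator (Ioi m) (fun z => (z - m) * ((Real.sqrt (2 * π * s^2))⁻¹ *
            Real.exp (-(z - m)^2 / (2 * s^2)))) := by
      funext z
      have hp : ((Real.toNNReal (gaussianPDFReal m (Real.toNNReal (s^2)) z) : ℝ≥0) : ℝ)
          = (Real.sqrt (2 * π * s^2))⁻¹ * Real.exp (-(z - m)^2 / (2 * s^2)) := by
        rw [Real.coe_toNNReal _ (gaussianPDFReal_nonneg _ _ _), pdf_eq]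
      simp only [NNReal.smul_def, smul_eq_mul, hp]
      by_cases hz : z ∈ Ioi m
      · rw [Set.indicator_of_mem hz, max_eq_right (by simpa using (mem_Ioi.mp hz).le)]
        ring
      · rw [Set.indicator_of_notMem hz, max_eq_left (by simp only [mem_Ioi, not_lt] at hz; linarith)]
        ring
    rw [heq, integrable_indicator_iff measurableSet_Ioi]
    have := gd_integrableOn m s 0 hs0 le_rfl
    simpa using this

lemma key_lemma {Ω : Type*} [MeasurableSpace Ω] (P : Measure Ω) [IsProbabilityMeasure P]
    (m s : ℝ) (hs : 0 ≤ s) (Zx : Ω → ℝ)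
    (hZx : Measure.map Zx P = gaussianReal m (Real.toNNReal (s^2)))
    (ζ : Ω → ℝ) (hζ : ∀ ω, 0 ≤ ζ ω) (hζm : AEMeasurable ζ P)
    (hindep : IndepFun ζ Zx P)
    (hint : Integrable (fun ω => Real.exp (-ζ ω / 2)) P) :
    ∫ ω, max 0 (Zx ω - m - Real.sqrt (ζ ω) * s) ∂P
      ≤ s / Real.sqrt (2 * π) * ∫ ω, Real.exp (-ζ ω / 2) ∂P := by
  set γ := gaussianReal m (Real.toNNReal (s^2)) with hγ
  have hZm : AEMeasurable Zx P := by
    by_contra h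
    rw [Measure.map_of_not_aemeasurable h] at hZx
    have := congrArg (fun (μ : Measure ℝ) => μ univ) hZx
    simp [γ] at this
  set f : ℝ × ℝ → ℝ := fun p => max 0 (p.2 - m - Real.sqrt p.1 * s) with hf
  have hfc : Continuous f := by
    apply continuous_const.max
    exact (continuous_snd.sub continuous_const).sub
      ((Real.continuous_sqrt.comp continuous_fst).mul continuous_const)
  have hpair : AEMeasurable (fun ω => (ζ ω, Zx ω)) P := hζm.prodMk hZm
  set ν := Measure.map ζ P with hν
  have hνprob : IsProbabilityMeasure ν := Measure.isProbabilityMeasure_map hζm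
  have hprod : Measure.map (fun ω => (ζ ω, Zx ω)) P = ν.prod γ := by
    rw [← hZx]
    exact (indepFun_iff_map_prod_eq_prod_map_map hζm hZm).mp hindep
  have step1 : ∫ ω, max 0 (Zx ω - m - Real.sqrt (ζ ω) * s) ∂P = ∫ p, f p ∂(ν.prod γ) := by
    rw [← hprod, integral_map hpair hfc.aestronglyMeasurable]
  -- integrability of f on the product
  have hBint : Integrable (fun p : ℝ × ℝ => max 0 (p.2 - m)) (ν.prod γ) := by
    have h1 : Integrable (fun z => max 0 (z - m)) (Measure.map Prod.snd (ν.prod γ)) := by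
      rw [Measure.map_snd_prod]
      simpa using gauss_plus_integrable m s hs
    exact h1.comp_measurable measurable_snd
  have hfint : Integrable f (ν.prod γ) := by
    refine hBint.mono' hfc.aestronglyMeasurable ?_
    filter_upwards with p
    rw [Real.norm_eq_abs, abs_of_nonneg (le_max_left _ _)]
    apply max_le_max le_rfl
    have := Real.sqrt_nonneg p.1
    nlinarith
  rw [step1, integral_prod f hfint]
  have haet : ∀ᵐ t ∂ν, 0 ≤ t := by
    rw [hν]
    exact (ae_map_iff hζm measurableSet_Ici).mpr (ae_of_all _ hζ)
  have hASM : AEStronglyMeasurable (fun t : ℝ => Real.exp (-t / 2)) (Measure.map ζ P) :=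
    Continuous.aestronglyMeasurable (by continuity)
  have hexpint : Integrable (fun t => Real.exp (-t / 2)) ν := by
    rw [hν]
    exact (integrable_map_measure hASM hζm).mpr hint
  calc ∫ t, ∫ z, f (t, z) ∂γ ∂ν
      ≤ ∫ t, s / Real.sqrt (2 * π) * Real.exp (-t / 2) ∂ν := by
        apply integral_mono_of_nonneg
        · filter_upwards with t
          apply integral_nonneg
          intro z
          exact le_max_left _ _
        · exact hexpint.const_mul _
        · filter_upwards [haet] with t ht
          have hb := gauss_plus_bound m s (Real.sqrt t) hs (Real.sqrt_nonneg t)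
          rw [Real.sq_sqrt ht] at hb
          calc ∫ z, f (t, z) ∂γ = ∫ z, max 0 (z - m - Real.sqrt t * s) ∂γ := rfl
            _ ≤ s * Real.exp (-t / 2) / Real.sqrt (2 * π) := hb
            _ = s / Real.sqrt (2 * π) * Real.exp (-t / 2) := by ring
    _ = s / Real.sqrt (2 * π) * ∫ t, Real.exp (-t / 2) ∂ν := integral_const_mul _ _
    _ = s / Real.sqrt (2 * π) * ∫ ω, Real.exp (-ζ ω / 2) ∂P := by
        rw [hν, integral_map hζm hASM]

theorem R1_bound_randomized_ucb
    {Ω : Type*} [MeasurableSpace Ω] (P : Measure Ω) [IsProbabilityMeasure P]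
    {X : Type*} [Fintype X] [Nonempty X]
    (μ : X → ℝ) (σ : X → ℝ) (hσ : ∀ x, 0 ≤ σ x) (hσ1 : ∀ x, σ x ≤ 1)
    (Z : X → Ω → ℝ)
    (hZ : ∀ x, Measure.map (Z x) P = gaussianReal (μ x) (Real.toNNReal ((σ x) ^ 2)))
    (ζ : Ω → ℝ) (hζ : ∀ ω, 0 ≤ ζ ω)
    (hindep : IndepFun ζ (fun ω => fun x => Z x ω) P)
    (hint : Integrable (fun ω => Real.exp (-ζ ω / 2)) P) :
    ∫ ω, Finset.univ.sup' Finset.univ_nonempty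
        (fun x => max 0 (Z x ω - μ x - Real.sqrt (ζ ω) * σ x)) ∂P ≤
      ((Fintype.card X : ℝ) / Real.sqrt (2 * π)) * ∫ ω, Real.exp (-ζ ω / 2) ∂P := by
  -- measurability of ζ
  have hζm : AEMeasurable ζ P := by
    have h1 : AEMeasurable (fun ω => Real.exp (-ζ ω / 2)) P :=
      hint.aestronglyMeasurable.aemeasurable
    have h2 : ζ = fun ω => -2 * Real.log (Real.exp (-ζ ω / 2)) := by
      funext ω; rw [Real.log_exp]; ring
    rw [h2]
    exact (Real.measurable_log.const_mul (-2)).comp_aemeasurable h1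
  have hZm : ∀ x, AEMeasurable (Z x) P := by
    intro x
    by_contra h
    have hZx := hZ x
    rw [Measure.map_of_not_aemeasurable h] at hZx
    have h3 := congrArg (fun (ρ : Measure ℝ) => ρ univ) hZx
    simp at h3
  have hindx : ∀ x, IndepFun ζ (Z x) P := by
    intro x
    have := hindep.comp measurable_id (measurable_pi_apply x)
    exact this
  -- integrability of each term
  set g : X → Ω → ℝ := fun x ω => max 0 (Z x ω - μ x - Real.sqrt (ζ ω) * σ x) with hg
  have hg0 : ∀ i ω, 0 ≤ g i ω := fun i ω => le_max_left _ _
  have hterm : ∀ x, Integrable (g x) P := by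
    intro x
    have hbint : Integrable (fun ω => max 0 (Z x ω - μ x)) P := by
      have := (integrable_map_measure
        ((continuous_const.max (continuous_id.sub continuous_const)).aestronglyMeasurable)
        (hZm x)).mp (by rw [hZ x]; exact gauss_plus_integrable (μ x) (σ x) (hσ x))
      exact this
    refine hbint.mono' ?_ ?_
    · exact (aemeasurable_const.max (((hZm x).sub aemeasurable_const).sub
        ((Measurable.comp_aemeasurable Real.continuous_sqrt.measurable hζm).mul aemeasurable_const))).aestronglyMeasurable
    · filter_upwards with ω
      rw [Real.norm_eq_abs, abs_of_nonneg (le_max_left _ _)]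
      apply max_le_max le_rfl
      have h4 := Real.sqrt_nonneg (ζ ω)
      have h5 := hσ x
      nlinarith
  have hsum : Integrable (fun ω => ∑ x, g x ω) P := integrable_finset_sum _ (fun x _ => hterm x)
  have hI : 0 ≤ ∫ ω, Real.exp (-ζ ω / 2) ∂P :=
    integral_nonneg (fun ω => Real.exp_nonneg _)
  calc ∫ ω, Finset.univ.sup' Finset.univ_nonempty (fun x => g x ω) ∂P
      ≤ ∫ ω, ∑ x, g x ω ∂P := by
        apply integral_mono_of_nonneg
        · filter_upwards with ω
          obtain ⟨x₀⟩ := ‹Nonempty X›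
          exact le_trans (hg0 x₀ ω) (Finset.le_sup' (fun x => g x ω) (Finset.mem_univ x₀))
        · exact hsum
        · filter_upwards with ω
          apply Finset.sup'_le
          intro x _
          exact Finset.single_le_sum (fun i _ => hg0 i ω) (Finset.mem_univ x)
    _ = ∑ x, ∫ ω, g x ω ∂P := integral_finset_sum _ (fun x _ => hterm x)
    _ ≤ ∑ x : X, (1 / Real.sqrt (2 * π)) * ∫ ω, Real.exp (-ζ ω / 2) ∂P := by
        apply Finset.sum_le_sum
        intro x _
        calc ∫ ω, g x ω ∂P
            ≤ σ x / Real.sqrt (2 * π) * ∫ ω, Real.exp (-ζ ω / 2) ∂P :=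
              key_lemma P (μ x) (σ x) (hσ x) (Z x) (hZ x) ζ hζ hζm (hindx x) hint
          _ ≤ 1 / Real.sqrt (2 * π) * ∫ ω, Real.exp (-ζ ω / 2) ∂P := by
              apply mul_le_mul_of_nonneg_right _ hI
              apply div_le_div_of_nonneg_right ?_ ?_ |>.trans le_rfl
              all_goals first
                | exact hσ1 x
                | positivity
          _ = 1 / Real.sqrt (2 * π) * ∫ ω, Real.exp (-ζ ω / 2) ∂P := rfl
    _ = ((Fintype.card X : ℝ) / Real.sqrt (2 * π)) * ∫ ω, Real.exp (-ζ ω / 2) ∂P := by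
        rw [Finset.sum_const, Finset.card_univ, nsmul_eq_mul]
        ring
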